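/- arXiv:1911.01835 — 5 statements merged into one kernel-verified Lean document; each statement's English description precedes it below -/
import Mathlib

section
/- For any real I with I ≠ -1 and σ + a·I ≠ 0, the point (A/(1+I), Bσ/(σ + a·I), I) is an equilibrium of the Yamada system with I ≠ 0 if and only if I is a root of the quadratic a·I² + (a(1-A) + (B+1)σ)·I + σ(B + 1 - A) = 0 (equivalently, G - Q - 1 = 0 at that point). -/
/-- The Yamada vector field on ℝ³ (coordinates (G, Q, I)). -/
noncomputable def yamada (A B a γ σ : ℝ) (x : ℝ × ℝ × ℝ) : ℝ × ℝ × ℝ :=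
  (γ * (A - x.1 - x.1 * x.2.2),
   (γ / σ) * (B - x.2.1 - (a / σ) * x.2.1 * x.2.2),
   (x.1 - x.2.1 - 1) * x.2.2)

/-- For I ≠ -1, σ + a·I ≠ 0 and I ≠ 0, the point
(A/(1+I), Bσ/(σ + aI), I) is an equilibrium of the Yamada system if and
only if I is a root of the quadratic
a·I² + (a(1-A) + (B+1)σ)·I + σ(B+1-A) = 0. -/
theorem nontrivial_equilibrium_iff_quadratic (A B a γ σ I : ℝ)
    (hγ : 0 < γ) (hσ : 0 < σ) (ha : 0 < a)
    (hI1 : I ≠ -1) (hI2 : σ + a * I ≠ 0) (hI0 : I ≠ 0) :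
    yamada A B a γ σ (A / (1 + I), B * σ / (σ + a * I), I) = (0, 0, 0) ↔
      a * I ^ 2 + (a * (1 - A) + (B + 1) * σ) * I + σ * (B + 1 - A) = 0 := by
  have h1 : 1 + I ≠ 0 := fun h => hI1 (by linarith)
  have hσ' : σ ≠ 0 := ne_of_gt hσ
  have e1 : γ * (A - A / (1 + I) - A / (1 + I) * I) = 0 := by
    field_simp; ring
  have e2 : (γ / σ) * (B - B * σ / (σ + a * I) - (a / σ) * (B * σ / (σ + a * I)) * I) = 0 := by
    field_simp; ring
  simp only [yamada, Prod.mk.injEq, e1, e2, true_and]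
  constructor
  · intro h
    rcases mul_eq_zero.mp h with h | h
    · have h' : A * (σ + a * I) - B * σ * (1 + I) - (1 + I) * (σ + a * I) = 0 := by
        rw [div_sub_div _ _ h1 hI2, div_sub_one (mul_ne_zero h1 hI2), div_eq_zero_iff] at h
        rcases h with h | h
        · linarith [h]
        · exact absurd h (mul_ne_zero h1 hI2)
      nlinarith [h']
    · exact absurd h hI0
  · intro h
    have h' : A / (1 + I) - B * σ / (σ + a * I) - 1 = 0 := by
      rw [div_sub_div _ _ h1 hI2, div_sub_one (mul_ne_zero h1 hI2), div_eq_zero_iff]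
      left
      nlinarith [h]
    rw [h', zero_mul]
end

section
/- Let D(A) = a²(A-1)² - 2a(BA - A + B + 1)σ + (B+1)²σ², the discriminant governing the existence of nontrivial equilibria of the Yamada system. Then D(A) = 0 at A = A_S(σ) := (a + (B-1)σ + 2√(Bσ(a - σ)))/a, provided 0 < σ < a, B > 0, a > 0. -/
/-- The discriminant D(A) governing the existence of nontrivial equilibria of
the Yamada system vanishes at the saddle-node value
A_S(σ) = (a + (B-1)σ + 2√(Bσ(a-σ)))/a, provided 0 < σ < a and B > 0. -/
theorem discriminant_zero_at_saddle_node (a B σ : ℝ)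
    (ha : 0 < a) (hB : 0 < B) (hσ : 0 < σ) (hσa : σ < a) :
    let A := (a + (B - 1) * σ + 2 * Real.sqrt (B * σ * (a - σ))) / a
    a ^ 2 * (A - 1) ^ 2 - 2 * a * (B * A - A + B + 1) * σ + (B + 1) ^ 2 * σ ^ 2 = 0 := by
  intro A
  have hs : Real.sqrt (B * σ * (a - σ)) ^ 2 = B * σ * (a - σ) := by
    rw [Real.sq_sqrt]
    nlinarith [mul_pos hB hσ]
  have hA : a * A = a + (B - 1) * σ + 2 * Real.sqrt (B * σ * (a - σ)) := by
    simp only [A]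
    field_simp [ha.ne']
  have h1 : a * A - a = (B - 1) * σ + 2 * Real.sqrt (B * σ * (a - σ)) := by
    linarith
  have h2 : a ^ 2 * (A - 1) ^ 2 = (a * A - a) ^ 2 := by ring
  have h3 : 2 * a * (B * A - A + B + 1) * σ
      = 2 * ((B - 1) * (a * A) + (B + 1) * a) * σ := by ring
  rw [h2, h1, h3, hA]
  nlinarith [hs]
end

section
/- The saddle-node curve A_S(σ) = (a + (B-1)σ + 2√(Bσ(a-σ)))/a and the transcritical line A_T = B + 1 intersect (A_S(σ) = B + 1) exactly at σ = aB/(B+1), for 0 < σ < a, a > 0, B > 0. -/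
/-- The saddle-node curve A_S(σ) = (a + (B-1)σ + 2√(Bσ(a-σ)))/a meets the
transcritical line A = B + 1 exactly at σ = aB/(B+1), for 0 < σ < a. -/
theorem saddle_node_meets_transcritical (a B σ : ℝ)
    (ha : 0 < a) (hB : 0 < B) (hσ : 0 < σ) (hσa : σ < a) :
    (a + (B - 1) * σ + 2 * Real.sqrt (B * σ * (a - σ))) / a = B + 1 ↔
      σ = a * B / (B + 1) := by
  have hB1 : (0:ℝ) < B + 1 := by linarith
  constructor
  · intro h
    rw [div_eq_iff ha.ne'] at h
    set s := Real.sqrt (B * σ * (a - σ)) with hs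
    have hsnn : 0 ≤ s := Real.sqrt_nonneg _
    have hsq : s ^ 2 = B * σ * (a - σ) := Real.sq_sqrt (mul_pos (mul_pos hB hσ) (sub_pos.mpr hσa)).le
    have h2 : 2 * s = (B + 1) * a - a - (B - 1) * σ := by linarith
    have h3 : (2 * s) ^ 2 = ((B + 1) * a - a - (B - 1) * σ) ^ 2 := by rw [h2]
    have key : ((B + 1) * σ - a * B) ^ 2 = 0 := by nlinarith
    have hz : (B + 1) * σ - a * B = 0 := by
      exact pow_eq_zero_iff (by norm_num) |>.mp key
    field_simp
    linarith
  · intro h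
    subst h
    have harg : B * (a * B / (B + 1)) * (a - a * B / (B + 1)) = (a * B / (B + 1)) ^ 2 := by
      field_simp; ring
    rw [harg, Real.sqrt_sq (by positivity)]
    field_simp
    ring
end

section
/- Let a, B > 0 and Q(σ) = a²B - 2aBσ² - aσ³ + (B+1)σ⁴. If a > (16/27)(-9B - 8B² + √(27B + 108B² + 144B³ + 64B⁴)), then Q has a positive real root. -/
/-- If a > (16/27)(-9B - 8B² + √(27B + 108B² + 144B³ + 64B⁴)) with a, B > 0,
then the quartic Q(σ) = a²B - 2aBσ² - aσ³ + (B+1)σ⁴ has a positive real root. -/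
theorem quartic_has_positive_root (a B : ℝ) (ha : 0 < a) (hB : 0 < B)
    (hcond : a > (16 / 27) * (-9 * B - 8 * B ^ 2 +
      Real.sqrt (27 * B + 108 * B ^ 2 + 144 * B ^ 3 + 64 * B ^ 4))) :
    ∃ σ : ℝ, 0 < σ ∧
      a ^ 2 * B - 2 * a * B * σ ^ 2 - a * σ ^ 3 + (B + 1) * σ ^ 4 = 0 := by
  obtain ⟨Q, hQ⟩ : ∃ Q : ℝ → ℝ, Q = fun σ =>
      a ^ 2 * B - 2 * a * B * σ ^ 2 - a * σ ^ 3 + (B + 1) * σ ^ 4 := ⟨_, rfl⟩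
  have hB1 : (0:ℝ) < B + 1 := by linarith
  -- Step 1: the squared condition G > 0
  have hD : (0:ℝ) ≤ 27 * B + 108 * B ^ 2 + 144 * B ^ 3 + 64 * B ^ 4 := by positivity
  have hsqD := Real.sq_sqrt hD
  have hsqDnn := Real.sqrt_nonneg (27 * B + 108 * B ^ 2 + 144 * B ^ 3 + 64 * B ^ 4)
  have hG : (27 * a + 144 * B + 128 * B ^ 2) ^ 2 - 256 * B * (4 * B + 3) ^ 3 > 0 := by
    have h1 : Real.sqrt (27 * B + 108 * B ^ 2 + 144 * B ^ 3 + 64 * B ^ 4)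
        < (27 / 16) * a + 9 * B + 8 * B ^ 2 := by linarith
    nlinarith [hsqD, hsqDnn, h1]
  -- Step 2: the critical point
  obtain ⟨s, hs⟩ : ∃ s : ℝ, s = Real.sqrt (a * (9 * a + 64 * B + 64 * B ^ 2)) := ⟨_, rfl⟩
  have hs2 : s ^ 2 = 9 * a ^ 2 + 64 * a * B + 64 * a * B ^ 2 := by
    rw [hs, Real.sq_sqrt (by positivity)]; ring
  have hspos : 0 < s := by rw [hs]; exact Real.sqrt_pos.mpr (by positivity)
  obtain ⟨σ₀, hσ₀⟩ : ∃ x : ℝ, x = (3 * a + s) / (8 * (B + 1)) := ⟨_, rfl⟩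
  have hσ₀pos : 0 < σ₀ := by
    rw [hσ₀]; exact div_pos (by linarith) (by linarith)
  -- Key identity: Q(σ₀) * (8(B+1))^4 = 8 a² (1+B) (L - (64B(1+B)+9a) s)
  obtain ⟨L, hL⟩ : ∃ x : ℝ, x = 512 * B * (1 + B) ^ 2 - 288 * a * B * (1 + B) - 27 * a ^ 2 := ⟨_, rfl⟩
  have hx : σ₀ * (8 * (B + 1)) = 3 * a + s := by
    rw [hσ₀]; field_simp
  have hkey : Q σ₀ * (8 * (B + 1)) ^ 4
      = 8 * a ^ 2 * (1 + B) * (L - (64 * B * (1 + B) + 9 * a) * s) := by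
    rw [hQ, hL]
    linear_combination (1 * s ^ 3 + 1 * B * s ^ 3 + 1 * a * s ^ 2 + (-128) * a * B * s + 1 * a * B * s ^ 2 + (-256) * a * B ^ 2 * s + (-128) * a * B ^ 3 * s + (-21) * a ^ 2 * s + (-384) * a ^ 2 * B + (-21) * a ^ 2 * B * s + (-768) * a ^ 2 * B ^ 2 + (-384) * a ^ 2 * B ^ 3 + (-45) * a ^ 3 + (-45) * a ^ 3 * B + 8 * σ₀ * s ^ 2 + 16 * σ₀ * B * s ^ 2 + 8 * σ₀ * B ^ 2 * s ^ 2 + (-16) * σ₀ * a * s + (-1024) * σ₀ * a * B + (-32) * σ₀ * a * B * s + (-3072) * σ₀ * a * B ^ 2 + (-16) * σ₀ * a * B ^ 2 * s + (-3072) * σ₀ * a * B ^ 3 + (-1024) * σ₀ * a * B ^ 4 + (-120) * σ₀ * a ^ 2 + (-240) * σ₀ * a ^ 2 * B + (-120) * σ₀ * a ^ 2 * B ^ 2 + 64 * σ₀ ^ 2 * s + 192 * σ₀ ^ 2 * B * s + 192 * σ₀ ^ 2 * B ^ 2 * s + 64 * σ₀ ^ 2 * B ^ 3 * s + (-320) *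 σ₀ ^ 2 * a + (-960) * σ₀ ^ 2 * a * B + (-960) * σ₀ ^ 2 * a * B ^ 2 + (-320) * σ₀ ^ 2 * a * B ^ 3 + 512 * σ₀ ^ 3 + 2048 * σ₀ ^ 3 * B + 3072 * σ₀ ^ 3 * B ^ 2 + 2048 * σ₀ ^ 3 * B ^ 3 + 512 * σ₀ ^ 3 * B ^ 4) * hx + (1 * s ^ 2 + 1 * B * s ^ 2 + 4 * a * s + (-64) * a * B + 4 * a * B * s + (-128) * a * B ^ 2 + (-64) * a * B ^ 3 + (-9) * a ^ 2 + (-9) * a ^ 2 * B) * hs2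
  -- P > 0 (from 27 P = 1024 B (1+B)^3 G)
  have hP : a * (64 * B * (1 + B) + 9 * a) ^ 3 - L ^ 2 > 0 := by
    have h27 : 27 * (a * (64 * B * (1 + B) + 9 * a) ^ 3 - L ^ 2)
        = 1024 * B * (1 + B) ^ 3 *
          ((27 * a + 144 * B + 128 * B ^ 2) ^ 2 - 256 * B * (4 * B + 3) ^ 3) := by
      rw [hL]; ring
    nlinarith [mul_pos (mul_pos (by positivity : (0:ℝ) < 1024 * B) (by positivity : (0:ℝ) < (1 + B) ^ 3)) hG]
  -- hence L - (u + 9a) s < 0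
  have hneg : L - (64 * B * (1 + B) + 9 * a) * s < 0 := by
    have hus : 0 < (64 * B * (1 + B) + 9 * a) * s := by positivity
    have hprod : ((64 * B * (1 + B) + 9 * a) * s) ^ 2 - L ^ 2
        = a * (64 * B * (1 + B) + 9 * a) ^ 3 - L ^ 2 := by
      linear_combination (64 * B * (1 + B) + 9 * a) ^ 2 * hs2
    have hM2 : L ^ 2 < ((64 * B * (1 + B) + 9 * a) * s) ^ 2 := by linarith
    have := lt_of_pow_lt_pow_left₀ 2 hus.le hM2
    linarith
  have hQσ₀ : Q σ₀ < 0 := by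
    have h4 : (0:ℝ) < (8 * (B + 1)) ^ 4 := by positivity
    have hneg' : Q σ₀ * (8 * (B + 1)) ^ 4 < 0 := by
      rw [hkey]
      exact mul_neg_of_pos_of_neg (by positivity) hneg
    by_contra hcon
    push_neg at hcon
    exact absurd (mul_nonneg hcon h4.le) (not_le.mpr hneg')
  -- big point where Q ≥ 0
  obtain ⟨T, hT⟩ : ∃ x : ℝ, x = σ₀ + a + 2 * a * B + 1 := ⟨_, rfl⟩
  have hab : 0 < a * B := mul_pos ha hB
  have hσ₀T : σ₀ ≤ T := by rw [hT]; linarith only [ha, hab]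
  have hT1 : (1:ℝ) ≤ T := by rw [hT]; linarith only [ha, hab, hσ₀pos]
  have hTa : a + 2 * a * B ≤ T := by rw [hT]; linarith only [hσ₀pos]
  have hQT : 0 ≤ Q T := by
    have hTpos : 0 < T := by linarith only [hT1]
    simp only [hQ]
    have h1 : a * T ^ 3 + 2 * a * B * T ^ 2 ≤ T ^ 4 := by
      have h2 : (a + 2 * a * B) * T ^ 3 ≤ T * T ^ 3 :=
        mul_le_mul_of_nonneg_right (by linarith only [hTa]) (by positivity)
      have h3 : 2 * a * B * T ^ 2 ≤ 2 * a * B * T ^ 3 :=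
        mul_le_mul_of_nonneg_left (pow_le_pow_right₀ hT1 (by norm_num : 2 ≤ 3))
          (by positivity)
      have h6 : T * T ^ 3 = T ^ 4 := by ring
      linarith only [h2, h3, h6]
    have h4 : 0 ≤ B * T ^ 4 := by positivity
    have h5 : 0 ≤ a ^ 2 * B := by positivity
    linarith only [h1, h4, h5]
  -- IVT
  have hcont : ContinuousOn Q (Set.Icc σ₀ T) := by
    rw [hQ]; fun_prop
  have h0mem : (0:ℝ) ∈ Set.Icc (Q σ₀) (Q T) := ⟨le_of_lt hQσ₀, hQT⟩
  obtain ⟨c, hc, hQc⟩ := intermediate_value_Icc hσ₀T hcont h0mem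
  simp only [hQ] at hQc
  exact ⟨c, lt_of_lt_of_le hσ₀pos hc.1, hQc⟩
end

section
/- With a = 1.8 and B = 5.8, the ordering 1 < (aB/(B+1))^(1/3) < σ_BT0 < aB/(B+1) holds, where σ_BT0 is the smallest positive root of Q(σ) = a²B - 2aBσ² - aσ³ + (B+1)σ⁴; i.e., the points HT₀, BT₀, and ST occur in this order as σ increases. -/
/-- With a = 1.8 and B = 5.8, letting σ_BT0 be the smallest positive root of
Q(σ) = a²B - 2aBσ² - aσ³ + (B+1)σ⁴, the ordering
1 < (aB/(B+1))^(1/3) < σ_BT0 < aB/(B+1) holds: the points HT₀, BT₀ and ST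
occur in this order as σ increases. -/
theorem ordering_HT0_BT0_ST (σBT0 : ℝ)
    (hpos : 0 < σBT0)
    (hroot : (1.8 : ℝ) ^ 2 * 5.8 - 2 * 1.8 * 5.8 * σBT0 ^ 2 - 1.8 * σBT0 ^ 3
        + (5.8 + 1) * σBT0 ^ 4 = 0)
    (hmin : ∀ σ : ℝ, 0 < σ →
      (1.8 : ℝ) ^ 2 * 5.8 - 2 * 1.8 * 5.8 * σ ^ 2 - 1.8 * σ ^ 3 + (5.8 + 1) * σ ^ 4 = 0 →
      σBT0 ≤ σ) :
    1 < ((1.8 * 5.8 / (5.8 + 1) : ℝ)) ^ ((1 : ℝ) / 3) ∧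
    ((1.8 * 5.8 / (5.8 + 1) : ℝ)) ^ ((1 : ℝ) / 3) < σBT0 ∧
    σBT0 < (1.8 * 5.8 / (5.8 + 1) : ℝ) := by
  set K : ℝ := (1.8 * 5.8 / (5.8 + 1) : ℝ) with hKdef
  have hK : (0:ℝ) < K := by norm_num [hKdef]
  have hK1 : (1:ℝ) < K := by norm_num [hKdef]
  have hKval : K = 261/170 := by norm_num [hKdef]
  set c : ℝ := K ^ ((1:ℝ)/3) with hcdef
  have hc0 : 0 < c := Real.rpow_pos_of_pos hK _
  have hc3 : c ^ (3:ℕ) = K := by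
    rw [hcdef, ← Real.rpow_natCast (K ^ ((1:ℝ)/3)) 3, ← Real.rpow_mul hK.le]
    norm_num
  have h1c : 1 < c := by
    rw [hcdef, Real.one_lt_rpow_iff_of_pos hK]
    left; exact ⟨hK1, by norm_num⟩
  -- σBT0 ^ 3 > K
  have hcube : K < σBT0 ^ 3 := by
    by_contra h
    push_neg at h
    rw [hKval] at h
    have hlt : σBT0 < 1.16 := by nlinarith [pow_pos hpos 3]
    nlinarith [pow_pos hpos 2, pow_pos hpos 4, sq_nonneg (σBT0 - 1.16),
      sq_nonneg (σBT0^2 - 1.3456), mul_pos hpos hpos]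
  have hlt2 : c < σBT0 := by
    by_contra h
    push_neg at h
    have := pow_le_pow_left₀ hpos.le h 3
    rw [hc3] at this
    linarith
  -- existence of a root in [1.16, 1.2]
  have hub : σBT0 < K := by
    set f : ℝ → ℝ := fun σ => (1.8 : ℝ) ^ 2 * 5.8 - 2 * 1.8 * 5.8 * σ ^ 2 - 1.8 * σ ^ 3
        + (5.8 + 1) * σ ^ 4 with hfdef
    have hcont : ContinuousOn f (Set.Icc (1.16:ℝ) 1.2) := by
      apply Continuous.continuousOn; fun_prop
    have hsub := intermediate_value_Icc' (a := (1.16:ℝ)) (b := 1.2) (by norm_num) hcont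
    have h0 : (0:ℝ) ∈ Set.Icc (f 1.2) (f 1.16) := by
      constructor <;> norm_num [hfdef]
    obtain ⟨ξ, hξmem, hξ0⟩ := hsub h0
    have hξpos : 0 < ξ := by linarith [hξmem.1]
    have := hmin ξ hξpos (by simpa [hfdef] using hξ0)
    have : σBT0 ≤ 1.2 := le_trans this hξmem.2
    rw [hKval]
    linarith
  exact ⟨h1c, hlt2, hub⟩
end
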